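/- If P is a prime element of the ring *ℤ (an ultrapower of ℤ by a nonprincipal ultrafilter on ℕ) that is infinite (i.e., |P| > n for every standard natural number n), then the quotient ring *ℤ/P·*ℤ is a field of characteristic zero. -/

import Mathlib

section Aux

variable (𝒰 : Ultrafilter ℕ) (J : Ideal (ℕ → ℤ))
  (hJ : ∀ x : ℕ → ℤ, x ∈ J ↔ {i | x i = 0} ∈ 𝒰)

include hJ

lemma starInt_mk_eq_iff (x y : ℕ → ℤ) :
    Ideal.Quotient.mk J x = Ideal.Quotient.mk J y ↔ {i | x i = y i} ∈ 𝒰 := by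
  rw [Ideal.Quotient.eq, hJ]
  simp only [Pi.sub_apply, sub_eq_zero]

lemma starInt_dvd_iff (x y : ℕ → ℤ) :
    Ideal.Quotient.mk J x ∣ Ideal.Quotient.mk J y ↔ {i | x i ∣ y i} ∈ 𝒰 := by
  constructor
  · rintro ⟨c, hc⟩
    obtain ⟨c', rfl⟩ := Ideal.Quotient.mk_surjective c
    rw [← map_mul, starInt_mk_eq_iff 𝒰 J hJ] at hc
    filter_upwards [hc] with i hi
    exact ⟨c' i, hi⟩
  · intro h
    refine ⟨Ideal.Quotient.mk J (fun i => y i / x i), ?_⟩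
    rw [← map_mul, starInt_mk_eq_iff 𝒰 J hJ]
    filter_upwards [h] with i hi
    exact (Int.mul_ediv_cancel' hi).symm

lemma starInt_unit (u : ℕ → ℤ) (hu : IsUnit (Ideal.Quotient.mk J u)) :
    {i | u i = 1 ∨ u i = -1} ∈ 𝒰 := by
  obtain ⟨v, hv⟩ := isUnit_iff_exists_inv.mp hu
  obtain ⟨v', rfl⟩ := Ideal.Quotient.mk_surjective v
  rw [← map_mul, show (1 : (ℕ → ℤ) ⧸ J) = Ideal.Quotient.mk J 1 from rfl,
    starInt_mk_eq_iff 𝒰 J hJ] at hv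
  filter_upwards [hv] with i hi
  exact Int.isUnit_iff.mp (IsUnit.of_mul_eq_one _ hi)

end Aux

/-- **Quotient of `*ℤ` by an infinite prime.**  Let `*ℤ` be the ultrapower `ℤ^ℕ/𝒰`
for a nonprincipal ultrafilter `𝒰` on `ℕ`, realized as the quotient of `ℕ → ℤ` by the
ideal `J` of sequences vanishing `𝒰`-a.e.  If `P = [p]` is a prime element of `*ℤ`
which is infinite (i.e. `|P| > n` for every standard `n`, meaning
`{i | n < |p i|} ∈ 𝒰` for all `n : ℕ`), then `*ℤ / P·*ℤ` is a field of
characteristic zero. -/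
theorem quotient_starInt_by_infinite_prime
    (𝒰 : Ultrafilter ℕ) (h𝒰 : ∀ a : ℕ, 𝒰 ≠ pure a)
    (J : Ideal (ℕ → ℤ)) (hJ : ∀ x : ℕ → ℤ, x ∈ J ↔ {i | x i = 0} ∈ 𝒰)
    (p : ℕ → ℤ) (hp : Prime (Ideal.Quotient.mk J p))
    (hinf : ∀ n : ℕ, {i | (n : ℤ) < |p i|} ∈ 𝒰) :
    IsField (((ℕ → ℤ) ⧸ J) ⧸ Ideal.span {Ideal.Quotient.mk J p}) ∧
    CharZero (((ℕ → ℤ) ⧸ J) ⧸ Ideal.span {Ideal.Quotient.mk J p}) := by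
  classical
  have h2 : {i | (2 : ℤ) ≤ |p i|} ∈ 𝒰 := by
    filter_upwards [hinf 1] with i hi
    exact hi
  -- p i is prime for 𝒰-almost all i
  have hprime : {i | Prime (p i)} ∈ 𝒰 := by
    by_contra hT
    have hT' : {i | ¬ Prime (p i)} ∈ 𝒰 := (𝒰.compl_mem_iff_notMem).mpr hT
    set a : ℕ → ℤ := fun i =>
      if (¬ Prime (p i)) ∧ 2 ≤ |p i| then ((p i).natAbs.minFac : ℤ) else p i with ha
    set b : ℕ → ℤ := fun i => p i / a i with hb
    have hadvd : ∀ i, a i ∣ p i := by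
      intro i
      by_cases h : (¬ Prime (p i)) ∧ 2 ≤ |p i|
      · simp only [ha, h, if_true]
        exact dvd_trans (Int.natCast_dvd_natCast.mpr ((p i).natAbs.minFac_dvd))
          (Int.natAbs_dvd.mpr dvd_rfl)
      · simp [ha, h]
    have hpab : ∀ i, p i = a i * b i := fun i => (Int.mul_ediv_cancel' (hadvd i)).symm
    have hne1 : ∀ i, 2 ≤ |p i| → (p i).natAbs ≠ 1 := by
      intro i h2i h1
      have : |p i| = 1 := by rw [Int.abs_eq_natAbs, h1]; rfl
      omega
    have hmul : Ideal.Quotient.mk J p ∣ Ideal.Quotient.mk J a * Ideal.Quotient.mk J b := by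
      rw [← map_mul]
      exact dvd_of_eq (congrArg _ (funext hpab))
    rcases hp.2.2 _ _ hmul with h | h
    · rw [starInt_dvd_iff 𝒰 J hJ] at h
      obtain ⟨i, hdvd, hinp, hi2⟩ :=
        Filter.nonempty_of_mem (Filter.inter_mem h (Filter.inter_mem hT' h2))
      simp only [Set.mem_setOf_eq] at hdvd hinp hi2
      have heq : (p i).natAbs = (a i).natAbs := Int.natAbs_eq_of_dvd_dvd hdvd (hadvd i)
      have hai : a i = ((p i).natAbs.minFac : ℤ) := by
        simp only [ha, if_pos (And.intro hinp hi2)]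
      rw [hai, Int.natAbs_natCast] at heq
      exact hinp (Int.prime_iff_natAbs_prime.mpr (heq ▸ Nat.minFac_prime (hne1 i hi2)))
    · rw [starInt_dvd_iff 𝒰 J hJ] at h
      obtain ⟨i, hdvd, hinp, hi2⟩ :=
        Filter.nonempty_of_mem (Filter.inter_mem h (Filter.inter_mem hT' h2))
      simp only [Set.mem_setOf_eq] at hdvd hinp hi2
      have hai : a i = ((p i).natAbs.minFac : ℤ) := by
        simp only [ha, if_pos (And.intro hinp hi2)]
      have hamin : 2 ≤ (p i).natAbs.minFac := (Nat.minFac_prime (hne1 i hi2)).two_le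
      have hpne : p i ≠ 0 := by
        intro h0
        rw [h0] at hi2
        simp at hi2
      have hbne : b i ≠ 0 := by
        intro h0
        rw [hpab i, h0, mul_zero] at hpne
        exact hpne rfl
      have hle : (p i).natAbs ≤ (b i).natAbs := Int.natAbs_le_of_dvd_ne_zero hdvd hbne
      have hmulabs : (p i).natAbs = (a i).natAbs * (b i).natAbs := by
        rw [hpab i, Int.natAbs_mul]
      have h2a : 2 ≤ (a i).natAbs := by
        rw [hai, Int.natAbs_natCast]; exact hamin
      have hpa : 2 ≤ (p i).natAbs := by
        rw [Int.abs_eq_natAbs] at hi2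
        exact_mod_cast hi2
      nlinarith [hle, hmulabs, h2a, hpa]
  -- the span of `mk p` is a proper ideal
  have htop : Ideal.span {Ideal.Quotient.mk J p} ≠ ⊤ := by
    rw [Ne, Ideal.span_singleton_eq_top]
    exact hp.not_isUnit
  have : Nontrivial (((ℕ → ℤ) ⧸ J) ⧸ Ideal.span {Ideal.Quotient.mk J p}) :=
    Ideal.Quotient.nontrivial_iff.mpr htop
  constructor
  · refine ⟨exists_pair_ne _, fun x y => mul_comm x y, ?_⟩
    intro q hq
    obtain ⟨r, rfl⟩ := Ideal.Quotient.mk_surjective q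
    obtain ⟨x, rfl⟩ := Ideal.Quotient.mk_surjective r
    have hx : ¬ ({i | p i ∣ x i} ∈ 𝒰) := by
      intro hmem
      exact hq (by
        rw [Ideal.Quotient.eq_zero_iff_mem, Ideal.mem_span_singleton]
        exact (starInt_dvd_iff 𝒰 J hJ p x).mpr hmem)
    have hndvd : {i | ¬ p i ∣ x i} ∈ 𝒰 := (𝒰.compl_mem_iff_notMem).mpr hx
    have hcop : {i | IsCoprime (p i) (x i)} ∈ 𝒰 := by
      filter_upwards [hndvd, hprime] with i h1 h2
      exact h2.coprime_iff_not_dvd.mpr h1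
    -- choose Bezout coefficients
    set u : ℕ → ℤ := fun i =>
      if h : IsCoprime (p i) (x i) then h.choose else 0 with hu
    set v : ℕ → ℤ := fun i =>
      if h : IsCoprime (p i) (x i) then h.choose_spec.choose else 0 with hv
    have hbez : {i | u i * p i + v i * x i = 1} ∈ 𝒰 := by
      filter_upwards [hcop] with i hi
      simp only [hu, hv, dif_pos hi]
      exact hi.choose_spec.choose_spec
    refine ⟨Ideal.Quotient.mk _ (Ideal.Quotient.mk J v), ?_⟩
    rw [← map_mul, ← map_mul, show
      (1 : ((ℕ → ℤ) ⧸ J) ⧸ Ideal.span {Ideal.Quotient.mk J p}) =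
        Ideal.Quotient.mk _ (Ideal.Quotient.mk J 1) from rfl,
      Ideal.Quotient.eq, ← map_sub, Ideal.mem_span_singleton,
      show x * v - 1 = (fun i => x i * v i - 1) from rfl,
      starInt_dvd_iff 𝒰 J hJ]
    filter_upwards [hbez] with i hi
    exact ⟨-u i, by linarith⟩
  · refine charZero_of_inj_zero ?_
    intro n hn
    by_contra hn0
    rw [show ((n : ℕ) : ((ℕ → ℤ) ⧸ J) ⧸ Ideal.span {Ideal.Quotient.mk J p})
        = Ideal.Quotient.mk _ (Ideal.Quotient.mk J (fun _ => (n : ℤ))) by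
      push_cast; rfl,
      Ideal.Quotient.eq_zero_iff_mem, Ideal.mem_span_singleton,
      starInt_dvd_iff 𝒰 J hJ] at hn
    obtain ⟨i, hdvd, hlt⟩ := Filter.nonempty_of_mem (Filter.inter_mem hn (hinf n))
    simp only [Set.mem_setOf_eq] at hdvd hlt
    have h1 : (p i).natAbs ≤ ((n : ℤ)).natAbs :=
      Int.natAbs_le_of_dvd_ne_zero hdvd (by exact_mod_cast hn0)
    rw [Int.natAbs_natCast] at h1
    rw [Int.abs_eq_natAbs] at hlt
    omega
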